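/- For any nonzero function f : ℤ_p → ℂ where p is prime, |supp(f)| + |supp(f̂)| ≥ p + 1 (in particular it exceeds p). -/

import Mathlib

open Finset
open scoped Classical BigOperators

/-- Fourier transform of `f : ℤ_p → ℂ`:  `f̂ r = ∑ x, f x · e^{2πi r x / p}`. -/
noncomputable def fourierZMod {p : ℕ} [NeZero p] (f : ZMod p → ℂ) (r : ZMod p) : ℂ :=
  ∑ x : ZMod p, f x * Complex.exp (2 * Real.pi * Complex.I * ((r.val : ℂ) * (x.val : ℂ)) / p)

open Polynomial
open scoped Matrix



theorem frenkel {p : ℕ} (hp : p.Prime) :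
    ∀ k : ℕ, ∀ g : Polynomial (ZMod p), g ≠ 0 → g.natDegree < p → g.support.card = k →
      ¬ ((X - 1 : Polynomial (ZMod p)) ^ k ∣ g) := by
  haveI := Fact.mk hp
  intro k
  induction k with
  | zero => intro g hg _ hcard _; exact hg (Polynomial.support_eq_empty.mp (Finset.card_eq_zero.mp hcard))
  | succ k ih =>
    intro g hg hdeg hcard hdvd
    rcases Nat.eq_zero_or_pos k with hk0 | hkpos
    · subst hk0
      obtain ⟨m, b, hb, rfl⟩ := Polynomial.card_support_eq_one.mp hcard
      have h1 : (C b * X ^ m).eval 1 = 0 := by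
        obtain ⟨q, hq⟩ := hdvd
        rw [hq]; simp
      simp at h1
      exact hb h1
    · set m := g.natTrailingDegree with hm
      have hmmem : m ∈ g.support := Polynomial.natTrailingDegree_mem_support_of_nonzero hg
      set g₁ : Polynomial (ZMod p) := X * derivative g - C (m : ZMod p) * g with hg₁
      have hcoeff : ∀ i : ℕ, g₁.coeff i = ((i : ZMod p) - (m : ZMod p)) * g.coeff i := by
        intro i
        rcases Nat.eq_zero_or_pos i with rfl | hi
        · rw [hg₁]
          rw [coeff_sub, mul_comm X, coeff_mul_X_zero, coeff_C_mul]
          push_cast; ring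
        · obtain ⟨i, rfl⟩ := Nat.exists_eq_succ_of_ne_zero hi.ne'
          rw [hg₁, coeff_sub, mul_comm X, coeff_mul_X, coeff_derivative, coeff_C_mul]
          push_cast; ring
      have hsupp : g₁.support = g.support.erase m := by
        ext i
        simp only [Polynomial.mem_support_iff, Finset.mem_erase, hcoeff]
        constructor
        · intro h
          refine ⟨fun hi => ?_, fun h0 => h (by rw [h0, mul_zero])⟩
          subst hi; simp at h
        · rintro ⟨hne, h0⟩
          have hi : i < p := lt_of_le_of_lt (Polynomial.le_natDegree_of_ne_zero h0) hdeg
          have hmlt : m < p := lt_of_le_of_lt (Polynomial.natTrailingDegree_le_natDegree g) hdeg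
          have : (i : ZMod p) ≠ (m : ZMod p) := by
            intro hc
            apply hne
            have := congrArg ZMod.val hc
            rwa [ZMod.val_natCast_of_lt hi, ZMod.val_natCast_of_lt hmlt] at this
          exact mul_ne_zero (sub_ne_zero.mpr this) h0
      have hcard₁ : g₁.support.card = k := by
        rw [hsupp, Finset.card_erase_of_mem hmmem, hcard]; omega
      have hg₁ne : g₁ ≠ 0 := by
        intro hc
        rw [hc] at hcard₁
        simp at hcard₁
        omega
      have hdeg₁ : g₁.natDegree < p := by
        have : g₁.natDegree ≤ g.natDegree := by
          apply Polynomial.natDegree_le_iff_coeff_eq_zero.mpr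
          intro N hN
          rw [hcoeff, Polynomial.coeff_eq_zero_of_natDegree_lt hN, mul_zero]
        omega
      have hdvd₁ : (X - 1 : Polynomial (ZMod p)) ^ k ∣ g₁ := by
        obtain ⟨q, hq⟩ := hdvd
        refine ⟨X * (C ((k:ZMod p)+1) * q + (X - 1) * derivative q) - C (m : ZMod p) * ((X-1) * q), ?_⟩
        rw [hg₁, hq, derivative_mul, derivative_pow]
        simp only [derivative_X, derivative_one, derivative_sub, Nat.add_sub_cancel]
        push_cast
        ring
      exact ih g₁ hg₁ne hdeg₁ hcard₁ hdvd₁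

variable {p : ℕ} (hp : p.Prime)

local notation "Rp" => AdjoinRoot (cyclotomic p ℤ)

noncomputable def zetaC (p : ℕ) : ℂ := Complex.exp (2 * Real.pi * Complex.I / p)

theorem zetaC_prim (hp : p.Prime) : IsPrimitiveRoot (zetaC p) p := by
  have := Complex.isPrimitiveRoot_exp p hp.ne_zero
  simpa [zetaC] using this

noncomputable def phiC (hp : p.Prime) : Rp →+* ℂ :=
  AdjoinRoot.lift (Int.castRingHom ℂ) (zetaC p) (by
    rw [← Polynomial.eval_map, Polynomial.map_cyclotomic]
    exact ((zetaC_prim hp).isRoot_cyclotomic hp.pos))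

theorem phiC_root (hp : p.Prime) : phiC hp (AdjoinRoot.root _) = zetaC p :=
  AdjoinRoot.lift_root _

theorem phiC_injective (hp : p.Prime) : Function.Injective (phiC hp) := by
  rw [injective_iff_map_eq_zero]
  intro a ha
  induction a using AdjoinRoot.induction_on with
  | ih g =>
    rw [phiC, AdjoinRoot.lift_mk] at ha
    have hint : IsIntegral ℤ (zetaC p) := (zetaC_prim hp).isIntegral hp.pos
    have hdvd : minpoly ℤ (zetaC p) ∣ g := by
      apply minpoly.isIntegrallyClosed_dvd hint
      rw [Polynomial.aeval_def]
      exact ha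
    rw [← Polynomial.cyclotomic_eq_minpoly (zetaC_prim hp) hp.pos] at hdvd
    rwa [AdjoinRoot.mk_eq_zero]

noncomputable def phiP (hp : p.Prime) : Rp →+* ZMod p :=
  AdjoinRoot.lift (Int.castRingHom (ZMod p)) 1 (by
    rw [Polynomial.eval₂_at_one]
    haveI := Fact.mk hp
    rw [Polynomial.eval_one_cyclotomic_prime]
    simp)

theorem phiP_root (hp : p.Prime) : phiP hp (AdjoinRoot.root _) = 1 :=
  AdjoinRoot.lift_root _

theorem ker_phiP (hp : p.Prime) {a : Rp} (ha : phiP hp a = 0) :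
    (AdjoinRoot.root _ - 1) ∣ a := by
  induction a using AdjoinRoot.induction_on with
  | ih g =>
    rw [phiP, AdjoinRoot.lift_mk] at ha
    rw [Polynomial.eval₂_at_one] at ha
    have hdvd : (p : ℤ) ∣ g.eval 1 := by
      rwa [← ZMod.intCast_zmod_eq_zero_iff_dvd]
    obtain ⟨c, hc⟩ := hdvd
    -- (X - 1) ∣ g - C (g.eval 1)
    have h1 : (X - C (1:ℤ)) ∣ (g - C (g.eval 1)) := by
      rw [Polynomial.dvd_iff_isRoot]
      simp [Polynomial.IsRoot]
    have h2 : (X - C (1:ℤ)) ∣ (cyclotomic p ℤ - C ((cyclotomic p ℤ).eval 1)) := by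
      rw [Polynomial.dvd_iff_isRoot]
      simp [Polynomial.IsRoot]
    haveI := Fact.mk hp
    rw [Polynomial.eval_one_cyclotomic_prime] at h2
    obtain ⟨u, hu⟩ := h1
    obtain ⟨v, hv⟩ := h2
    -- g = (X-1)*u + C c * (cyclotomic - (X-1)*v)
    have hg : g = (X - C 1) * (u - C c * v) + C c * cyclotomic p ℤ := by
      have : (C (p:ℤ) : ℤ[X]) = cyclotomic p ℤ - (X - C 1) * v := by
        rw [← hv]; ring
      have hgeq : g = (X - C 1) * u + C (g.eval 1) := by rw [← hu]; ring
      rw [hgeq, hc]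
      push_cast
      rw [Polynomial.C_mul, this]
      ring
    rw [hg, map_add, map_mul, map_mul, AdjoinRoot.mk_self, mul_zero, add_zero]
    have hmk : (AdjoinRoot.mk (cyclotomic p ℤ)) (X - C 1) = AdjoinRoot.root _ - 1 := by
      rw [map_sub, AdjoinRoot.mk_X]
      simp
    exact ⟨AdjoinRoot.mk _ (u - C c * v), by rw [← hmk, ← map_mul]⟩

noncomputable instance [hp' : Fact p.Prime] : IsDomain Rp :=
  Function.Injective.isDomain (phiC hp'.out) (phiC_injective hp'.out)

theorem prime_pi (hp : p.Prime) : Prime (AdjoinRoot.root (cyclotomic p ℤ) - 1) := by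
  haveI := Fact.mk hp
  have hne : (AdjoinRoot.root (cyclotomic p ℤ) - 1) ≠ 0 := by
    intro hc
    have := congrArg (phiC hp) hc
    rw [map_sub, map_one, phiC_root, map_zero, sub_eq_zero] at this
    exact (zetaC_prim hp).ne_one hp.one_lt this
  refine ⟨hne, ?_, ?_⟩
  · intro hu
    -- unit maps to unit under phiP but phiP π = 0
    have h0 : phiP hp (AdjoinRoot.root (cyclotomic p ℤ) - 1) = 0 := by
      rw [map_sub, map_one, phiP_root, sub_self]
    obtain ⟨u, hu⟩ := isUnit_iff_exists_inv.mp hu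
    have := congrArg (phiP hp) (hu)
    rw [map_mul, h0, zero_mul, map_one] at this
    exact zero_ne_one this
  · intro a b hab
    have : phiP hp a * phiP hp b = 0 := by
      obtain ⟨c, hc⟩ := hab
      have h2 := congrArg (phiP hp) hc
      rw [map_mul, map_mul, map_sub, map_one, phiP_root, sub_self, zero_mul] at h2
      exact h2
    rcases mul_eq_zero.mp this with h | h
    · exact Or.inl (ker_phiP hp h)
    · exact Or.inr (ker_phiP hp h)

-- distinct roots in a domain: product of (X - a i) divides
theorem prod_X_sub_C_dvd_of_roots {A : Type*} [CommRing A] [IsDomain A] {ι : Type*}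
    (t : Finset ι) (a : ι → A) (hinj : Set.InjOn a t) (g : Polynomial A)
    (hroots : ∀ i ∈ t, g.eval (a i) = 0) :
    (∏ i ∈ t, (X - C (a i))) ∣ g := by
  classical
  induction t using Finset.induction_on generalizing g with
  | empty => simp
  | insert j t' hni ih =>
    have hdvd1 : (X - C (a j)) ∣ g := by
      rw [Polynomial.dvd_iff_isRoot]
      exact hroots j (Finset.mem_insert_self j t')
    obtain ⟨h, hh⟩ := hdvd1
    have hdvd2 : (∏ i ∈ t', (X - C (a i))) ∣ h := by
      apply ih (fun x hx y hy => hinj (Finset.mem_insert_of_mem hx) (Finset.mem_insert_of_mem hy))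
      intro i hi
      have h0 := hroots i (Finset.mem_insert_of_mem hi)
      rw [hh] at h0
      simp only [Polynomial.eval_mul, Polynomial.eval_sub, Polynomial.eval_X, Polynomial.eval_C] at h0
      have hne : a i - a j ≠ 0 := by
        rw [sub_ne_zero]
        intro hc
        exact hni (hinj (Finset.mem_insert_of_mem hi) (Finset.mem_insert_self j t') hc ▸ hi)
      rcases mul_eq_zero.mp h0 with h | h
      · exact absurd h hne
      · exact h
    rw [Finset.prod_insert hni, hh]
    exact mul_dvd_mul_left _ hdvd2

set_option maxHeartbeats 1000000 in
set_option synthInstance.maxHeartbeats 400000 in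
theorem cheb (hp : p.Prime) {n : ℕ} (b s : Fin n → ZMod p)
    (hb : Function.Injective b) (hs : Function.Injective s) :
    (Matrix.of fun i j : Fin n =>
      (AdjoinRoot.root (cyclotomic p ℤ)) ^ ((b i).val * (s j).val)).det ≠ 0 := by
  classical
  haveI := Fact.mk hp
  haveI : NeZero p := ⟨hp.ne_zero⟩
  haveI : IsNoetherianRing Rp :=
    isNoetherianRing_of_surjective _ _ (Ideal.Quotient.mk _) Ideal.Quotient.mk_surjective
  haveI : WfDvdMonoid Rp := IsNoetherianRing.wfDvdMonoid
  set π : Rp := AdjoinRoot.root (cyclotomic p ℤ) - 1 with hπ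
  have hπprime := prime_pi hp
  set M : Matrix (Fin n) (Fin n) Rp := Matrix.of fun i j =>
    (AdjoinRoot.root (cyclotomic p ℤ)) ^ ((b i).val * (s j).val) with hM
  intro h0
  obtain ⟨v, hv, hMv⟩ := (Matrix.exists_mulVec_eq_zero_iff (A := Rp)).mpr h0
  -- Step: any kernel vector has all entries divisible by π
  have step : ∀ c : Fin n → Rp, M *ᵥ c = 0 → ∀ j, π ∣ c j := by
    intro c hc j
    apply ker_phiP hp
    by_contra hj0
    set g : Polynomial Rp := ∑ j : Fin n, C (c j) * X ^ (s j).val with hg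
    have heval : ∀ i, g.eval ((AdjoinRoot.root (cyclotomic p ℤ)) ^ (b i).val) = 0 := by
      intro i
      have := congrFun hc i
      rw [Matrix.mulVec, dotProduct] at this
      simp only [Pi.zero_apply] at this
      rw [hg, Polynomial.eval_finset_sum]
      rw [← this]
      apply Finset.sum_congr rfl
      intro j _
      simp only [Polynomial.eval_mul, Polynomial.eval_C, Polynomial.eval_pow, Polynomial.eval_X]
      rw [← pow_mul, hM]
      simp [mul_comm]
    have hainj : ∀ i i' : Fin n,
        (AdjoinRoot.root (cyclotomic p ℤ)) ^ (b i).val =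
        (AdjoinRoot.root (cyclotomic p ℤ)) ^ (b i').val → i = i' := by
      intro i i' hii
      have := congrArg (phiC hp) hii
      rw [map_pow, map_pow, phiC_root] at this
      have hval := (zetaC_prim hp).pow_inj ((b i).val_lt) ((b i').val_lt) this
      exact hb (ZMod.val_injective p hval)
    have hPdvd : (∏ i : Fin n, (X - C ((AdjoinRoot.root (cyclotomic p ℤ)) ^ (b i).val))) ∣ g := by
      apply prod_X_sub_C_dvd_of_roots
      · intro i _ i' _ h; exact hainj i i' h
      · intro i _; exact heval i
    obtain ⟨h, hh⟩ := hPdvd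
    -- map to ZMod p
    have hmap := congrArg (Polynomial.map (phiP hp)) hh
    rw [Polynomial.map_mul, Polynomial.map_prod] at hmap
    have hPbar : ∀ i : Fin n, ((X : Polynomial Rp) -
        C ((AdjoinRoot.root (cyclotomic p ℤ)) ^ (b i).val)).map (phiP hp)
        = (X - 1 : Polynomial (ZMod p)) := by
      intro i
      rw [Polynomial.map_sub, Polynomial.map_X, Polynomial.map_C, map_pow, phiP_root, one_pow,
        Polynomial.C_1]
    rw [Finset.prod_congr rfl (fun i _ => hPbar i), Finset.prod_const, Finset.card_univ,
      Fintype.card_fin] at hmap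
    set gbar := g.map (phiP hp) with hgbar
    have hgbar_eq : gbar = ∑ j : Fin n, C (phiP hp (c j)) * X ^ (s j).val := by
      rw [hgbar, hg, Polynomial.map_sum]
      apply Finset.sum_congr rfl
      intro j _
      rw [Polynomial.map_mul, Polynomial.map_C, Polynomial.map_pow, Polynomial.map_X]
    have hcoeffj : gbar.coeff ((s j).val) = phiP hp (c j) := by
      rw [hgbar_eq, Polynomial.finset_sum_coeff]
      rw [Finset.sum_eq_single j]
      · rw [Polynomial.coeff_C_mul, Polynomial.coeff_X_pow, if_pos rfl, mul_one]
      · intro j' _ hne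
        rw [Polynomial.coeff_C_mul, Polynomial.coeff_X_pow, if_neg, mul_zero]
        intro hc'
        exact hne (hs (ZMod.val_injective p hc'.symm))
      · intro hj; exact absurd (Finset.mem_univ j) hj
    have hgbarne : gbar ≠ 0 := fun hcz => hj0 (by rw [← hcoeffj, hcz, Polynomial.coeff_zero])
    have hdegbar : gbar.natDegree < p := by
      have hle : gbar.natDegree ≤ p - 1 := by
        apply Polynomial.natDegree_le_iff_coeff_eq_zero.mpr
        intro N hN
        rw [hgbar_eq, Polynomial.finset_sum_coeff]
        apply Finset.sum_eq_zero
        intro j' _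
        rw [Polynomial.coeff_C_mul, Polynomial.coeff_X_pow, if_neg, mul_zero]
        have := (s j').val_lt
        omega
      have := hp.pos
      omega
    have hsuppcard : gbar.support.card ≤ n := by
      have hsub : gbar.support ⊆ Finset.univ.image (fun j : Fin n => (s j).val) := by
        intro i hi
        rw [Polynomial.mem_support_iff] at hi
        by_contra hni
        apply hi
        rw [hgbar_eq, Polynomial.finset_sum_coeff]
        apply Finset.sum_eq_zero
        intro j' _
        rw [Polynomial.coeff_C_mul, Polynomial.coeff_X_pow, if_neg, mul_zero]
        intro hc'
        exact hni (Finset.mem_image.mpr ⟨j', Finset.mem_univ j', hc'.symm⟩)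
      calc gbar.support.card ≤ _ := Finset.card_le_card hsub
        _ ≤ _ := Finset.card_image_le.trans (by simp)
    have hdvdn : (X - 1 : Polynomial (ZMod p)) ^ gbar.support.card ∣ gbar := by
      refine dvd_trans (pow_dvd_pow _ hsuppcard) ?_
      rw [hmap]
      exact Dvd.intro _ rfl
    exact frenkel hp gbar.support.card gbar hgbarne hdegbar rfl hdvdn
  -- descent
  have key : ∀ k : ℕ, ∀ c : Fin n → Rp, M *ᵥ c = 0 → ∀ j, π ^ k ∣ c j := by
    intro k
    induction k with
    | zero => intro c _ j; simp
    | succ k ih =>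
      intro c hc j
      have hdiv := step c hc
      choose d hd using hdiv
      have hMd : M *ᵥ d = 0 := by
        funext i
        have hci := congrFun hc i
        rw [Matrix.mulVec, dotProduct] at hci ⊢
        have : ∑ j, M i j * c j = π * ∑ j, M i j * d j := by
          rw [Finset.mul_sum]
          apply Finset.sum_congr rfl
          intro j' _
          rw [hd j']
          ring
        rw [this] at hci
        rcases mul_eq_zero.mp hci with h | h
        · exact absurd h hπprime.ne_zero
        · simpa using h
      have := ih d hMd j
      rw [hd j, pow_succ']
      exact mul_dvd_mul_left π this
  obtain ⟨j₀, hj₀⟩ := Function.ne_iff.mp hv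
  obtain ⟨m, w, hw, hvw⟩ := WfDvdMonoid.max_power_factor hj₀ hπprime.irreducible
  have := key (m + 1) v hMv j₀
  rw [hvw, pow_succ] at this
  have hπm : (π : Rp) ^ m ≠ 0 := pow_ne_zero _ hπprime.ne_zero
  have : π ∣ w := (mul_dvd_mul_iff_left hπm).mp this
  exact hw this

theorem exp_eq_zeta_pow {p : ℕ} (hp : p.Prime) (a c : ℕ) :
    Complex.exp (2 * Real.pi * Complex.I * ((a : ℂ) * (c : ℂ)) / p) = zetaC p ^ (a * c) := by
  rw [zetaC, ← Complex.exp_nat_mul]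
  congr 1
  push_cast
  ring

theorem stmt_1 {p : ℕ} (hp : p.Prime) (f : ZMod p → ℂ) (hf : f ≠ 0) :
    haveI : NeZero p := ⟨hp.ne_zero⟩
    haveI : Fintype (ZMod p) := ZMod.fintype p
    p + 1 ≤
      (Finset.univ.filter fun x => f x ≠ 0).card +
      (Finset.univ.filter fun r => fourierZMod f r ≠ 0).card := by
  haveI : NeZero p := ⟨hp.ne_zero⟩
  haveI := Fact.mk hp
  by_contra hcon
  push_neg at hcon
  set S := (Finset.univ.filter fun x => f x ≠ 0) with hS
  set T := (Finset.univ.filter fun r => fourierZMod f r ≠ 0) with hT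
  have hcon' : S.card + T.card ≤ p := by omega
  set n := S.card with hn
  have hn1 : 0 < n := by
    obtain ⟨x, hx⟩ := Function.ne_iff.mp hf
    have : x ∈ S := by
      rw [hS, Finset.mem_filter]
      exact ⟨Finset.mem_univ x, by simpa using hx⟩
    exact Finset.card_pos.mpr ⟨x, this⟩
  have hU : n ≤ (Finset.univ \ T).card := by
    rw [Finset.card_sdiff_of_subset (Finset.subset_univ T), Finset.card_univ, ZMod.card]
    omega
  obtain ⟨B, hBsub, hBcard⟩ := Finset.exists_subset_card_eq hU
  -- enumerations
  set sfun : Fin n → ZMod p := fun j => ((S.equivFin.symm j : _) : ZMod p) with hsfun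
  have hsinj : Function.Injective sfun := fun a a' h =>
    S.equivFin.symm.injective (Subtype.ext h)
  have hsmem : ∀ j, sfun j ∈ S := fun j => (S.equivFin.symm j).2
  set bfun : Fin n → ZMod p := fun i => ((B.equivFin.symm (finCongr hBcard.symm i) : _) : ZMod p)
    with hbfun
  have hbinj : Function.Injective bfun := fun a a' h =>
    (finCongr hBcard.symm).injective (B.equivFin.symm.injective (Subtype.ext h))
  have hbmem : ∀ i, bfun i ∈ B := fun i => (B.equivFin.symm (finCongr hBcard.symm i)).2
  have hbzero : ∀ i, fourierZMod f (bfun i) = 0 := by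
    intro i
    have := hBsub (hbmem i)
    rw [Finset.mem_sdiff, hT, Finset.mem_filter] at this
    by_contra hne
    exact this.2 ⟨Finset.mem_univ _, hne⟩
  -- complex matrix
  set Mc : Matrix (Fin n) (Fin n) ℂ :=
    Matrix.of fun i j => zetaC p ^ ((bfun i).val * (sfun j).val) with hMc
  have hdet0 : Mc.det = 0 := by
    rw [← Matrix.exists_mulVec_eq_zero_iff]
    refine ⟨fun j => f (sfun j), ?_, ?_⟩
    · intro hz
      have := congrFun hz ⟨0, hn1⟩
      simp only [Pi.zero_apply] at this
      have hmem := hsmem ⟨0, hn1⟩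
      rw [hS, Finset.mem_filter] at hmem
      exact hmem.2 this
    · funext i
      rw [Matrix.mulVec, dotProduct]
      have : fourierZMod f (bfun i) = ∑ j, Mc i j * f (sfun j) := by
        rw [fourierZMod]
        rw [← Finset.sum_subset (Finset.subset_univ S) (by
          intro x _ hx
          rw [hS, Finset.mem_filter] at hx
          push_neg at hx
          rw [hx (Finset.mem_univ x), zero_mul])]
        rw [← Finset.sum_attach S (fun x => f x * Complex.exp
          (2 * Real.pi * Complex.I * (((bfun i).val : ℂ) * (x.val : ℂ)) / p))]
        rw [← Finset.univ_eq_attach, ← Equiv.sum_comp S.equivFin.symm]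
        apply Finset.sum_congr rfl
        intro j _
        rw [hMc]
        simp only [Matrix.of_apply]
        rw [exp_eq_zeta_pow hp]
        exact mul_comm _ _
      rw [← this, hbzero i, Pi.zero_apply]
  -- transfer to Rp and contradict cheb
  refine cheb hp bfun sfun hbinj hsinj (phiC_injective hp ?_)
  rw [map_zero, RingHom.map_det, ← hdet0]
  congr 1
  funext i j
  simp only [RingHom.mapMatrix_apply, Matrix.map_apply, Matrix.of_apply, map_pow, phiC_root, hMc]
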